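/- Let X and Y be nonnegative bounded random variables with X measurable with respect to 𝓗₁ and Y measurable with respect to 𝓗₂, where ψ(𝓗₁,𝓗₂) ≤ γ. Then E[XY] ≤ (1+γ)·E[X]·E[Y]. -/

import Mathlib

open MeasureTheory
open scoped ENNReal

lemma psi_aux {Ω : Type*} {m : MeasurableSpace Ω}
    (μ : Measure Ω) [IsProbabilityMeasure μ]
    (c : ℝ≥0∞) (hc_ne_top : c ≠ ⊤)
    (X Y : Ω → ℝ) (hX : Measurable X) (hY : Measurable Y)
    (hXnn : ∀ ω, 0 ≤ X ω) (hYnn : ∀ ω, 0 ≤ Y ω)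
    (hXbd : ∃ M, ∀ ω, X ω ≤ M) (hYbd : ∃ M, ∀ ω, Y ω ≤ M)
    (key : ∀ s t : ℝ, μ ({ω | s < X ω} ∩ {ω | t < Y ω})
      ≤ c * μ {ω | s < X ω} * μ {ω | t < Y ω}) :
    ∫ ω, X ω * Y ω ∂μ ≤ c.toReal * (∫ ω, X ω ∂μ) * (∫ ω, Y ω ∂μ) := by
  set LX : ℝ≥0∞ := ∫⁻ ω, ENNReal.ofReal (X ω) ∂μ with hLX_def
  set LY : ℝ≥0∞ := ∫⁻ ω, ENNReal.ofReal (Y ω) ∂μ with hLY_def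
  have hLX : LX = ∫⁻ s in Set.Ioi (0:ℝ), μ {ω | s < X ω} :=
    lintegral_eq_lintegral_meas_lt μ (Filter.Eventually.of_forall hXnn) hX.aemeasurable
  have hLY : LY = ∫⁻ t in Set.Ioi (0:ℝ), μ {ω | t < Y ω} :=
    lintegral_eq_lintegral_meas_lt μ (Filter.Eventually.of_forall hYnn) hY.aemeasurable
  obtain ⟨MX, hMX⟩ := hXbd
  obtain ⟨MY, hMY⟩ := hYbd
  have hLX_fin : LX ≠ ⊤ := by
    have : LX ≤ ENNReal.ofReal MX := by
      calc LX ≤ ∫⁻ _, ENNReal.ofReal MX ∂μ :=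
            lintegral_mono fun ω => ENNReal.ofReal_le_ofReal (hMX ω)
        _ = ENNReal.ofReal MX := by simp
    exact (this.trans_lt ENNReal.ofReal_lt_top).ne
  have hLY_fin : LY ≠ ⊤ := by
    have : LY ≤ ENNReal.ofReal MY := by
      calc LY ≤ ∫⁻ _, ENNReal.ofReal MY ∂μ :=
            lintegral_mono fun ω => ENNReal.ofReal_le_ofReal (hMY ω)
        _ = ENNReal.ofReal MY := by simp
    exact (this.trans_lt ENNReal.ofReal_lt_top).ne
  have hYrep : ∀ ω, ENNReal.ofReal (Y ω)
      = ∫⁻ t in Set.Ioi (0:ℝ), (if t < Y ω then (1:ℝ≥0∞) else 0) := by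
    intro ω
    have h : (fun t : ℝ => (if t < Y ω then (1:ℝ≥0∞) else 0))
        = Set.indicator (Set.Iio (Y ω)) (fun _ => (1:ℝ≥0∞)) := by
      funext t; simp [Set.indicator_apply, Set.mem_Iio]
    rw [h, lintegral_indicator measurableSet_Iio, setLIntegral_one,
      Measure.restrict_apply measurableSet_Iio, Set.Iio_inter_Ioi,
      Real.volume_Ioo, sub_zero]
  set I : ℝ≥0∞ := ∫⁻ ω, ENNReal.ofReal (X ω * Y ω) ∂μ with hI_def
  have hI1 : I = ∫⁻ ω, ∫⁻ t in Set.Ioi (0:ℝ),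
      (if t < Y ω then ENNReal.ofReal (X ω) else 0) ∂(volume) ∂μ := by
    apply lintegral_congr; intro ω
    rw [ENNReal.ofReal_mul (hXnn ω), hYrep ω, ← lintegral_const_mul' _ _ ENNReal.ofReal_ne_top]
    apply lintegral_congr; intro t
    by_cases h : t < Y ω <;> simp [h]
  have hswap : (∫⁻ ω, ∫⁻ t in Set.Ioi (0:ℝ),
        (if t < Y ω then ENNReal.ofReal (X ω) else 0) ∂(volume) ∂μ)
      = ∫⁻ t in Set.Ioi (0:ℝ), ∫⁻ ω,
        (if t < Y ω then ENNReal.ofReal (X ω) else 0) ∂μ ∂(volume) := by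
    apply lintegral_lintegral_swap
    apply Measurable.aemeasurable
    have hset : MeasurableSet {p : Ω × ℝ | p.2 < Y p.1} :=
      measurableSet_lt measurable_snd (hY.comp measurable_fst)
    exact Measurable.ite hset ((ENNReal.measurable_ofReal.comp hX).comp measurable_fst)
      measurable_const
  have hinner : ∀ t : ℝ, (∫⁻ ω, (if t < Y ω then ENNReal.ofReal (X ω) else 0) ∂μ)
      = ∫⁻ s in Set.Ioi (0:ℝ), μ ({ω | s < X ω} ∩ {ω | t < Y ω}) := by
    intro t
    have hBt : MeasurableSet {ω | t < Y ω} := measurableSet_lt measurable_const hY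
    have e1 : (fun ω => (if t < Y ω then ENNReal.ofReal (X ω) else 0))
        = Set.indicator {ω | t < Y ω} (fun ω => ENNReal.ofReal (X ω)) := by
      funext ω; simp [Set.indicator_apply, Set.mem_setOf_eq]
    rw [e1, lintegral_indicator hBt]
    rw [lintegral_eq_lintegral_meas_lt (μ.restrict {ω | t < Y ω})
      (Filter.Eventually.of_forall hXnn) hX.aemeasurable]
    apply lintegral_congr; intro s
    exact Measure.restrict_apply (hX measurableSet_Ioi)
  have hImain : I = ∫⁻ t in Set.Ioi (0:ℝ), ∫⁻ s in Set.Ioi (0:ℝ),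
      μ ({ω | s < X ω} ∩ {ω | t < Y ω}) ∂(volume) ∂(volume) := by
    rw [hI1, hswap]; exact lintegral_congr fun t => hinner t
  have hbound : I ≤ c * LX * LY := by
    rw [hImain]
    have step1 : ∀ t : ℝ, (∫⁻ s in Set.Ioi (0:ℝ), μ ({ω | s < X ω} ∩ {ω | t < Y ω}))
        ≤ c * μ {ω | t < Y ω} * LX := by
      intro t
      calc (∫⁻ s in Set.Ioi (0:ℝ), μ ({ω | s < X ω} ∩ {ω | t < Y ω}))
          ≤ ∫⁻ s in Set.Ioi (0:ℝ), c * μ {ω | t < Y ω} * μ {ω | s < X ω} := by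
            apply lintegral_mono; intro s
            calc μ ({ω | s < X ω} ∩ {ω | t < Y ω})
                ≤ c * μ {ω | s < X ω} * μ {ω | t < Y ω} := key s t
              _ = c * μ {ω | t < Y ω} * μ {ω | s < X ω} := by ring
        _ = c * μ {ω | t < Y ω} * ∫⁻ s in Set.Ioi (0:ℝ), μ {ω | s < X ω} :=
            lintegral_const_mul' _ _
              (ENNReal.mul_ne_top hc_ne_top (measure_ne_top μ _))
        _ = c * μ {ω | t < Y ω} * LX := by rw [← hLX]
    calc (∫⁻ t in Set.Ioi (0:ℝ), ∫⁻ s in Set.Ioi (0:ℝ),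
          μ ({ω | s < X ω} ∩ {ω | t < Y ω}))
        ≤ ∫⁻ t in Set.Ioi (0:ℝ), c * LX * μ {ω | t < Y ω} := by
          apply lintegral_mono; intro t
          calc (∫⁻ s in Set.Ioi (0:ℝ), μ ({ω | s < X ω} ∩ {ω | t < Y ω}))
              ≤ c * μ {ω | t < Y ω} * LX := step1 t
            _ = c * LX * μ {ω | t < Y ω} := by ring
      _ = c * LX * ∫⁻ t in Set.Ioi (0:ℝ), μ {ω | t < Y ω} :=
          lintegral_const_mul' _ _ (ENNReal.mul_ne_top hc_ne_top hLX_fin)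
      _ = c * LX * LY := by rw [← hLY]
  have hXY_int : ∫ ω, X ω * Y ω ∂μ = I.toReal := by
    rw [hI_def, integral_eq_lintegral_of_nonneg_ae
      (Filter.Eventually.of_forall fun ω => mul_nonneg (hXnn ω) (hYnn ω))
      ((hX.mul hY).aestronglyMeasurable)]
  have hXint : ∫ ω, X ω ∂μ = LX.toReal := by
    rw [hLX_def, integral_eq_lintegral_of_nonneg_ae
      (Filter.Eventually.of_forall hXnn) hX.aestronglyMeasurable]
  have hYint : ∫ ω, Y ω ∂μ = LY.toReal := by
    rw [hLY_def, integral_eq_lintegral_of_nonneg_ae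
      (Filter.Eventually.of_forall hYnn) hY.aestronglyMeasurable]
  rw [hXY_int, hXint, hYint]
  have hfin : c * LX * LY ≠ ⊤ :=
    ENNReal.mul_ne_top (ENNReal.mul_ne_top hc_ne_top hLX_fin) hLY_fin
  calc I.toReal ≤ (c * LX * LY).toReal := ENNReal.toReal_mono hfin hbound
    _ = c.toReal * LX.toReal * LY.toReal := by
        rw [ENNReal.toReal_mul, ENNReal.toReal_mul]

theorem psi_mixing_covariance_bound {Ω : Type*} {m : MeasurableSpace Ω}
    (μ : Measure Ω) [IsProbabilityMeasure μ]
    (H1 H2 : MeasurableSpace Ω) (h1 : H1 ≤ m) (h2 : H2 ≤ m)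
    (γ : ℝ) (hγ : 0 ≤ γ)
    (hpsi : ∀ A B : Set Ω, MeasurableSet[H1] A → MeasurableSet[H2] B →
      μ A * μ B ≠ 0 →
      |(μ (A ∩ B)).toReal / ((μ A).toReal * (μ B).toReal) - 1| ≤ γ)
    (X Y : Ω → ℝ)
    (hXmeas : Measurable[H1] X) (hYmeas : Measurable[H2] Y)
    (hXnn : ∀ ω, 0 ≤ X ω) (hYnn : ∀ ω, 0 ≤ Y ω)
    (hXbd : ∃ M, ∀ ω, X ω ≤ M) (hYbd : ∃ M, ∀ ω, Y ω ≤ M) :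
    ∫ ω, X ω * Y ω ∂μ ≤ (1 + γ) * (∫ ω, X ω ∂μ) * (∫ ω, Y ω ∂μ) := by
  have hX : @Measurable Ω ℝ m _ X := hXmeas.mono h1 le_rfl
  have hY : @Measurable Ω ℝ m _ Y := hYmeas.mono h2 le_rfl
  set c : ℝ≥0∞ := ENNReal.ofReal (1 + γ) with hc_def
  have hc_ne_top : c ≠ ⊤ := ENNReal.ofReal_ne_top
  have keySet : ∀ (S T : Set Ω), MeasurableSet[H1] S → MeasurableSet[H2] T →
      μ (S ∩ T) ≤ c * μ S * μ T := by
    intro S T hS hT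
    by_cases h0 : μ S * μ T = 0
    · rcases mul_eq_zero.1 h0 with h | h
      · have hz : μ (S ∩ T) = 0 :=
          le_antisymm ((measure_mono Set.inter_subset_left).trans h.le) zero_le
        simp [hz]
      · have hz : μ (S ∩ T) = 0 :=
          le_antisymm ((measure_mono Set.inter_subset_right).trans h.le) zero_le
        simp [hz]
    · have hspec := hpsi S T hS hT h0
      have hSne : μ S ≠ 0 := fun h => h0 (by simp [h])
      have hTne : μ T ≠ 0 := fun h => h0 (by simp [h])
      have hSfin : μ S ≠ ⊤ := measure_ne_top μ S
      have hTfin : μ T ≠ ⊤ := measure_ne_top μ T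
      have ha : 0 < (μ S).toReal := ENNReal.toReal_pos hSne hSfin
      have hb : 0 < (μ T).toReal := ENNReal.toReal_pos hTne hTfin
      have hab : 0 < (μ S).toReal * (μ T).toReal := mul_pos ha hb
      have hx : (μ (S ∩ T)).toReal ≤ (1 + γ) * ((μ S).toReal * (μ T).toReal) := by
        have h1' : (μ (S ∩ T)).toReal / ((μ S).toReal * (μ T).toReal) ≤ 1 + γ := by
          have := abs_le.1 hspec
          linarith [this.2]
        calc (μ (S ∩ T)).toReal
            = (μ (S ∩ T)).toReal / ((μ S).toReal * (μ T).toReal) *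
              ((μ S).toReal * (μ T).toReal) := by field_simp
          _ ≤ (1 + γ) * ((μ S).toReal * (μ T).toReal) :=
              mul_le_mul_of_nonneg_right h1' hab.le
      calc μ (S ∩ T) = ENNReal.ofReal ((μ (S ∩ T)).toReal) :=
            (ENNReal.ofReal_toReal (measure_ne_top _ _)).symm
        _ ≤ ENNReal.ofReal ((1 + γ) * ((μ S).toReal * (μ T).toReal)) :=
            ENNReal.ofReal_le_ofReal hx
        _ = c * μ S * μ T := by
            rw [ENNReal.ofReal_mul (by linarith), ENNReal.ofReal_mul ha.le,
              ENNReal.ofReal_toReal hSfin, ENNReal.ofReal_toReal hTfin, mul_assoc]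
  have key : ∀ s t : ℝ, μ ({ω | s < X ω} ∩ {ω | t < Y ω})
      ≤ c * μ {ω | s < X ω} * μ {ω | t < Y ω} := by
    intro s t
    have hAs : MeasurableSet[H1] {ω | s < X ω} :=
      measurableSet_lt measurable_const hXmeas
    have hBt : MeasurableSet[H2] {ω | t < Y ω} :=
      measurableSet_lt measurable_const hYmeas
    exact keySet _ _ hAs hBt
  have := psi_aux μ c hc_ne_top X Y hX hY hXnn hYnn hXbd hYbd key
  have hct : c.toReal = 1 + γ := ENNReal.toReal_ofReal (by linarith)
  rwa [hct] at this
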